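/- Let G be a group, n ∈ ℕ, and x, y : Fin n → G. Then the real n × n matrix M with entries M i j = 1 if (x j)⁻¹(x i) = (y j)⁻¹(y i) and M i j = 0 otherwise is positive semidefinite. -/

import Mathlib

private lemma matching_cond_iff {G : Type*} [Group G] (a b c d : G) :
    a⁻¹ * b = c⁻¹ * d ↔ b * d⁻¹ = a * c⁻¹ := by
  constructor <;> intro h
  · have : b = a * (c⁻¹ * d) := by rw [← h]; group
    rw [this]; group
  · have : b = (a * c⁻¹) * d := by rw [← h]; group
    rw [this]; group

/-- The 0-1 matrix with `M i j = 1` iff `(x j)⁻¹(x i) = (y j)⁻¹(y i)` is positive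
semidefinite. -/
theorem posSemidef_matching_matrix (G : Type*) [Group G] [DecidableEq G] (n : ℕ)
    (x y : Fin n → G) :
    (Matrix.of fun i j : Fin n =>
      if (x j)⁻¹ * x i = (y j)⁻¹ * y i then (1 : ℝ) else 0).PosSemidef := by
  set f : Fin n → G := fun i => x i * (y i)⁻¹ with hf
  have hcond : ∀ i j, ((x j)⁻¹ * x i = (y j)⁻¹ * y i) ↔ f i = f j := fun i j =>
    matching_cond_iff (x j) (x i) (y j) (y i)
  rw [Matrix.posSemidef_iff_dotProduct_mulVec]
  constructor
  · ext i j
    simp only [Matrix.conjTranspose_apply, Matrix.of_apply, star_trivial]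
    simp only [hcond]
    by_cases h : f i = f j
    · rw [if_pos h, if_pos h.symm]
    · rw [if_neg h, if_neg (fun h' => h h'.symm)]
  · intro v
    have key : dotProduct (star v) ((Matrix.of fun i j : Fin n =>
        if (x j)⁻¹ * x i = (y j)⁻¹ * y i then (1 : ℝ) else 0).mulVec v)
        = ∑ g ∈ Finset.univ.image f,
            (∑ i ∈ Finset.univ.filter (fun i => f i = g), v i) ^ 2 := by
      simp only [dotProduct, Matrix.mulVec, Matrix.of_apply, star_trivial,
        Pi.star_apply]
      have : ∀ i : Fin n, (∑ j, (if (x j)⁻¹ * x i = (y j)⁻¹ * y i then (1:ℝ) else 0) * v j)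
          = ∑ j ∈ Finset.univ.filter (fun j => f j = f i), v j := by
        intro i
        rw [Finset.sum_filter]
        refine Finset.sum_congr rfl fun j _ => ?_
        simp only [hcond i j]
        by_cases h : f i = f j
        · rw [if_pos h, if_pos h.symm, one_mul]
        · rw [if_neg h, if_neg (fun h' => h h'.symm), zero_mul]
      simp_rw [this]
      rw [← Finset.sum_fiberwise_of_maps_to (g := f) (t := Finset.univ.image f)
        (fun i _ => Finset.mem_image_of_mem f (Finset.mem_univ i))]
      refine Finset.sum_congr rfl fun g hg => ?_
      have h2 : ∀ i ∈ Finset.univ.filter (fun i => f i = g),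
          v i * (∑ j ∈ Finset.univ.filter (fun j => f j = f i), v j)
            = v i * (∑ j ∈ Finset.univ.filter (fun j => f j = g), v j) := by
        intro i hi
        rw [(Finset.mem_filter.1 hi).2]
      rw [Finset.sum_congr rfl h2, ← Finset.sum_mul, sq]
    rw [key]
    exact Finset.sum_nonneg fun g _ => sq_nonneg _
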